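/- Let Σ be a finite subset of Z^d, let U be a *-connected component of Σ, and let W be a finite subset of Z^d which is either (i) connected, or (ii) a *-connected component of Σ. Assume that U ⪯ W and that the closure of U is connected to the closure of W within Z^d \ Σ. Then any point of U that is connected to W by a nearest-neighbor path whose interior avoids U is also connected to W by a nearest-neighbor path whose interior avoids Σ. -/

import Mathlib

open scoped BigOperators

/-- Nearest-neighbor adjacency on `ℤ^d`. -/
def latAdj {d : ℕ} (x y : Fin d → ℤ) : Prop := (∑ i : Fin d, |x i - y i|) = 1

/-- `*`-adjacency on `ℤ^d` (`ℓ^∞`-distance one). -/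
def latAdjStar {d : ℕ} (x y : Fin d → ℤ) : Prop := x ≠ y ∧ ∀ i : Fin d, |x i - y i| ≤ 1

/-- A nearest-neighbor path of length `k` staying in `S`. -/
def IsPathIn {d : ℕ} (S : Set (Fin d → ℤ)) (γ : ℕ → Fin d → ℤ) (k : ℕ) : Prop :=
  (∀ i ≤ k, γ i ∈ S) ∧ ∀ i < k, latAdj (γ i) (γ (i + 1))

/-- `x` and `y` are connected by a nearest-neighbor path inside `S`. -/
def ConnIn {d : ℕ} (S : Set (Fin d → ℤ)) (x y : Fin d → ℤ) : Prop :=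
  ∃ (γ : ℕ → Fin d → ℤ) (k : ℕ), IsPathIn S γ k ∧ γ 0 = x ∧ γ k = y

/-- A set is connected if any two of its points are joined by a path within it. -/
def ConnectedSet {d : ℕ} (S : Set (Fin d → ℤ)) : Prop :=
  ∀ x ∈ S, ∀ y ∈ S, ConnIn S x y

def IsStarPathIn {d : ℕ} (S : Set (Fin d → ℤ)) (γ : ℕ → Fin d → ℤ) (k : ℕ) : Prop :=
  (∀ i ≤ k, γ i ∈ S) ∧ ∀ i < k, latAdjStar (γ i) (γ (i + 1))

def StarConnIn {d : ℕ} (S : Set (Fin d → ℤ)) (x y : Fin d → ℤ) : Prop :=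
  ∃ (γ : ℕ → Fin d → ℤ) (k : ℕ), IsStarPathIn S γ k ∧ γ 0 = x ∧ γ k = y

def StarConnectedSet {d : ℕ} (S : Set (Fin d → ℤ)) : Prop :=
  ∀ x ∈ S, ∀ y ∈ S, StarConnIn S x y

/-- The connected component of `x` within `S`. -/
def connComp {d : ℕ} (S : Set (Fin d → ℤ)) (x : Fin d → ℤ) : Set (Fin d → ℤ) :=
  {y | ConnIn S x y}

def starConnComp {d : ℕ} (S : Set (Fin d → ℤ)) (x : Fin d → ℤ) : Set (Fin d → ℤ) :=
  {y | StarConnIn S x y}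

/-- Inner vertex boundary. -/
def innerBd {d : ℕ} (S : Set (Fin d → ℤ)) : Set (Fin d → ℤ) :=
  {x | x ∈ S ∧ ∃ y, y ∉ S ∧ latAdj x y}

/-- Outer vertex boundary. -/
def outerBd {d : ℕ} (S : Set (Fin d → ℤ)) : Set (Fin d → ℤ) :=
  {x | x ∉ S ∧ ∃ y ∈ S, latAdj x y}

/-- Closure: a set together with its outer boundary. -/
def clo {d : ℕ} (S : Set (Fin d → ℤ)) : Set (Fin d → ℤ) := S ∪ outerBd S

/-- `fill U`: union of `U` with all finite connected components of its complement. -/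
def fill {d : ℕ} (U : Set (Fin d → ℤ)) : Set (Fin d → ℤ) :=
  U ∪ {x | x ∉ U ∧ (connComp Uᶜ x).Finite}

/-- `Surr U A`: `U` is surrounded by `A`, i.e. every infinite connected set meeting `U`
meets `A`. -/
def Surr {d : ℕ} (U A : Set (Fin d → ℤ)) : Prop :=
  ∀ S : Set (Fin d → ℤ), S.Infinite → ConnectedSet S → (S ∩ U).Nonempty → (S ∩ A).Nonempty

/-- Euclidean norm of a lattice point. -/
noncomputable def eucNorm {d : ℕ} (x : Fin d → ℤ) : ℝ :=
  Real.sqrt (∑ i : Fin d, ((x i : ℝ)) ^ 2)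

/-- The range of a path of length `k`. -/
def pathPts {d : ℕ} (γ : ℕ → Fin d → ℤ) (k : ℕ) : Set (Fin d → ℤ) :=
  {p | ∃ i ≤ k, γ i = p}

/-- `U` is a `*`-connected component of `S`. -/
def IsStarComponent {d : ℕ} (U S : Set (Fin d → ℤ)) : Prop :=
  ∃ x ∈ S, U = starConnComp S x

/-- `x` is connected to the set `W` by a nearest-neighbor path whose interior avoids `A`. -/
def ConnAvoiding {d : ℕ} (A : Set (Fin d → ℤ)) (x : Fin d → ℤ) (W : Set (Fin d → ℤ)) :
    Prop :=
  ∃ (γ : ℕ → Fin d → ℤ) (k : ℕ), γ 0 = x ∧ γ k ∈ W ∧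
    (∀ i < k, latAdj (γ i) (γ (i + 1))) ∧ ∀ i, 0 < i → i < k → γ i ∉ A


namespace AnnularProof

open Classical

variable {d : ℕ}

/-! ### Basic adjacency lemmas -/

lemma latAdj_symm {x y : Fin d → ℤ} (h : latAdj x y) : latAdj y x := by
  unfold latAdj at *
  rw [← h]
  exact Finset.sum_congr rfl (fun i _ => abs_sub_comm _ _)

lemma latAdj_ne {x y : Fin d → ℤ} (h : latAdj x y) : x ≠ y := by
  intro he
  subst he
  unfold latAdj at h
  simp at h

lemma latAdj_coord_le {x y : Fin d → ℤ} (h : latAdj x y) (i : Fin d) : |x i - y i| ≤ 1 := by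
  unfold latAdj at h
  rw [← h]
  exact Finset.single_le_sum (f := fun j => |x j - y j|) (fun j _ => abs_nonneg _) (Finset.mem_univ i)

lemma latAdj_star {x y : Fin d → ℤ} (h : latAdj x y) : latAdjStar x y :=
  ⟨latAdj_ne h, latAdj_coord_le h⟩

lemma latAdjStar_symm {x y : Fin d → ℤ} (h : latAdjStar x y) : latAdjStar y x :=
  ⟨h.1.symm, fun i => by rw [abs_sub_comm]; exact h.2 i⟩

/-! ### ConnIn utilities -/

lemma connIn_refl {S : Set (Fin d → ℤ)} {x : Fin d → ℤ} (h : x ∈ S) : ConnIn S x x :=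
  ⟨fun _ => x, 0, ⟨fun _ _ => h, fun i hi => absurd hi (Nat.not_lt_zero i)⟩, rfl, rfl⟩

lemma connIn_mem_left {S : Set (Fin d → ℤ)} {x y : Fin d → ℤ} (h : ConnIn S x y) : x ∈ S := by
  obtain ⟨γ, k, ⟨hmem, _⟩, h0, _⟩ := h
  rw [← h0]; exact hmem 0 (Nat.zero_le _)

lemma connIn_mem_right {S : Set (Fin d → ℤ)} {x y : Fin d → ℤ} (h : ConnIn S x y) : y ∈ S := by
  obtain ⟨γ, k, ⟨hmem, _⟩, _, hk⟩ := h
  rw [← hk]; exact hmem k le_rfl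

lemma connIn_symm {S : Set (Fin d → ℤ)} {x y : Fin d → ℤ} (h : ConnIn S x y) : ConnIn S y x := by
  obtain ⟨γ, k, ⟨hmem, hadj⟩, h0, hk⟩ := h
  refine ⟨fun i => γ (k - i), k, ⟨fun i hi => hmem _ (Nat.sub_le _ _), ?_⟩, by simp [hk], by simp [h0]⟩
  intro i hi
  have h1 : k - i = (k - (i+1)) + 1 := by omega
  show latAdj (γ (k - i)) (γ (k - (i + 1)))
  rw [h1]
  exact latAdj_symm (hadj _ (by omega))

lemma connIn_trans {S : Set (Fin d → ℤ)} {x y z : Fin d → ℤ}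
    (h1 : ConnIn S x y) (h2 : ConnIn S y z) : ConnIn S x z := by
  obtain ⟨γ₁, k₁, ⟨hmem₁, hadj₁⟩, h10, h1k⟩ := h1
  obtain ⟨γ₂, k₂, ⟨hmem₂, hadj₂⟩, h20, h2k⟩ := h2
  refine ⟨fun i => if i ≤ k₁ then γ₁ i else γ₂ (i - k₁), k₁ + k₂,
    ⟨?_, ?_⟩, by simp [h10], ?_⟩
  · intro i hi
    by_cases h : i ≤ k₁
    · simp [h]; exact hmem₁ i h
    · simp [h]; exact hmem₂ _ (by omega)
  · intro i hi
    by_cases h : i + 1 ≤ k₁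
    · have : i ≤ k₁ := by omega
      simp only [this, h, if_true]
      exact hadj₁ i (by omega)
    · by_cases h' : i ≤ k₁
      · -- i = k₁
        have hik : i = k₁ := by omega
        subst hik
        simp only [h', h, if_true, if_false]
        have e2 : i + 1 - i = 1 := by omega
        rw [e2, h1k, ← h20]
        exact hadj₂ 0 (by omega)
      · simp only [h, h', if_false]
        have : i + 1 - k₁ = (i - k₁) + 1 := by omega
        rw [this]
        exact hadj₂ _ (by omega)
  · by_cases h : k₁ + k₂ ≤ k₁
    · have : k₂ = 0 := by omega
      subst this
      simp only [h, if_true, Nat.add_zero]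
      rw [h1k, ← h20, h2k]
      simp
    · simp only [h, if_false]
      have : k₁ + k₂ - k₁ = k₂ := by omega
      rw [this, h2k]

lemma connIn_mono {S T : Set (Fin d → ℤ)} (hST : S ⊆ T) {x y : Fin d → ℤ}
    (h : ConnIn S x y) : ConnIn T x y := by
  obtain ⟨γ, k, ⟨hmem, hadj⟩, h0, hk⟩ := h
  exact ⟨γ, k, ⟨fun i hi => hST (hmem i hi), hadj⟩, h0, hk⟩

lemma connIn_single {S : Set (Fin d → ℤ)} {x y : Fin d → ℤ}
    (hx : x ∈ S) (hy : y ∈ S) (h : latAdj x y) : ConnIn S x y := by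
  refine ⟨fun i => if i = 0 then x else y, 1, ⟨?_, ?_⟩, by simp, by simp⟩
  · intro i hi
    by_cases h0 : i = 0 <;> simp [h0, hx, hy]
  · intro i hi
    have : i = 0 := by omega
    subst this
    simpa using h

/-! ### Star path utilities -/

lemma starConnIn_refl {S : Set (Fin d → ℤ)} {x : Fin d → ℤ} (h : x ∈ S) : StarConnIn S x x :=
  ⟨fun _ => x, 0, ⟨fun _ _ => h, fun i hi => absurd hi (Nat.not_lt_zero i)⟩, rfl, rfl⟩

lemma starConnIn_mem_right {S : Set (Fin d → ℤ)} {x y : Fin d → ℤ} (h : StarConnIn S x y) :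
    y ∈ S := by
  obtain ⟨γ, k, ⟨hmem, _⟩, _, hk⟩ := h
  rw [← hk]; exact hmem k le_rfl

lemma starConnIn_symm {S : Set (Fin d → ℤ)} {x y : Fin d → ℤ} (h : StarConnIn S x y) :
    StarConnIn S y x := by
  obtain ⟨γ, k, ⟨hmem, hadj⟩, h0, hk⟩ := h
  refine ⟨fun i => γ (k - i), k, ⟨fun i hi => hmem _ (Nat.sub_le _ _), ?_⟩, by simp [hk], by simp [h0]⟩
  intro i hi
  have h1 : k - i = (k - (i+1)) + 1 := by omega
  show latAdjStar (γ (k - i)) (γ (k - (i + 1)))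
  rw [h1]
  exact latAdjStar_symm (hadj _ (by omega))

lemma starConnIn_trans {S : Set (Fin d → ℤ)} {x y z : Fin d → ℤ}
    (h1 : StarConnIn S x y) (h2 : StarConnIn S y z) : StarConnIn S x z := by
  obtain ⟨γ₁, k₁, ⟨hmem₁, hadj₁⟩, h10, h1k⟩ := h1
  obtain ⟨γ₂, k₂, ⟨hmem₂, hadj₂⟩, h20, h2k⟩ := h2
  refine ⟨fun i => if i ≤ k₁ then γ₁ i else γ₂ (i - k₁), k₁ + k₂,
    ⟨?_, ?_⟩, by simp [h10], ?_⟩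
  · intro i hi
    by_cases h : i ≤ k₁
    · simp [h]; exact hmem₁ i h
    · simp [h]; exact hmem₂ _ (by omega)
  · intro i hi
    by_cases h : i + 1 ≤ k₁
    · have : i ≤ k₁ := by omega
      simp only [this, h, if_true]
      exact hadj₁ i (by omega)
    · by_cases h' : i ≤ k₁
      · have hik : i = k₁ := by omega
        subst hik
        simp only [h', h, if_true, if_false]
        have e2 : i + 1 - i = 1 := by omega
        rw [e2, h1k, ← h20]
        exact hadj₂ 0 (by omega)
      · simp only [h, h', if_false]
        have : i + 1 - k₁ = (i - k₁) + 1 := by omega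
        rw [this]
        exact hadj₂ _ (by omega)
  · by_cases h : k₁ + k₂ ≤ k₁
    · have : k₂ = 0 := by omega
      subst this
      simp only [h, if_true, Nat.add_zero]
      rw [h1k, ← h20, h2k]
      simp
    · simp only [h, if_false]
      have : k₁ + k₂ - k₁ = k₂ := by omega
      rw [this, h2k]

lemma starConnIn_single {S : Set (Fin d → ℤ)} {x y : Fin d → ℤ}
    (hx : x ∈ S) (hy : y ∈ S) (h : latAdjStar x y) : StarConnIn S x y := by
  refine ⟨fun i => if i = 0 then x else y, 1, ⟨?_, ?_⟩, by simp, by simp⟩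
  · intro i hi
    by_cases h0 : i = 0 <;> simp [h0, hx, hy]
  · intro i hi
    have : i = 0 := by omega
    subst this
    simpa using h

end AnnularProof
namespace AnnularProof

variable {d : ℕ}

/-! ### Steps and words -/

/-- A unit step: an axis and a sign. -/
abbrev Stp (d : ℕ) := Fin d × Bool

noncomputable section

def vec (s : Stp d) : Fin d → ℤ :=
  fun j => if j = s.1 then (if s.2 then 1 else -1) else 0

def sinv (s : Stp d) : Stp d := (s.1, !s.2)

lemma vec_sinv (s : Stp d) : vec (sinv s) = - vec s := by
  obtain ⟨i, b⟩ := s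
  funext j
  by_cases h : j = i <;> cases b <;> simp [vec, sinv, h]

lemma sinv_sinv (s : Stp d) : sinv (sinv s) = s := by
  simp [sinv]

lemma vec_coord_le (s : Stp d) (j : Fin d) : |vec s j| ≤ 1 := by
  simp only [vec]
  by_cases h : j = s.1 <;> cases s.2 <;> simp [h]

lemma latAdj_add_vec (x : Fin d → ℤ) (s : Stp d) : latAdj x (x + vec s) := by
  unfold latAdj
  have : ∀ j, |x j - (x + vec s) j| = if j = s.1 then 1 else 0 := by
    intro j
    simp only [Pi.add_apply, vec]
    by_cases h : j = s.1 <;> cases s.2 <;> simp [h]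
  rw [Finset.sum_congr rfl (fun j _ => this j)]
  simp

lemma latAdj_iff {x y : Fin d → ℤ} : latAdj x y ↔ ∃ s : Stp d, y = x + vec s := by
  constructor
  · intro h
    unfold latAdj at h
    -- there is a coordinate with |x j - y j| ≥ 1
    have hex : ∃ j : Fin d, x j ≠ y j := by
      by_contra hno
      push_neg at hno
      have : ∀ j : Fin d, |x j - y j| = 0 := fun j => by rw [hno j]; simp
      rw [Finset.sum_congr rfl (fun j _ => this j)] at h
      simp at h
    obtain ⟨j₀, hj₀⟩ := hex
    have h1 : (1 : ℤ) ≤ |x j₀ - y j₀| := by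
      have := abs_pos.mpr (sub_ne_zero.mpr hj₀)
      omega
    have hle : |x j₀ - y j₀| ≤ 1 := by
      rw [← h]
      exact Finset.single_le_sum (f := fun j => |x j - y j|) (fun j _ => abs_nonneg _)
        (Finset.mem_univ j₀)
    have heq : |x j₀ - y j₀| = 1 := le_antisymm hle h1
    have hrest : ∀ j, j ≠ j₀ → x j = y j := by
      intro j hj
      by_contra hne
      have h1' : (1 : ℤ) ≤ |x j - y j| := by
        have := abs_pos.mpr (sub_ne_zero.mpr hne)
        omega
      have : (2 : ℤ) ≤ ∑ i : Fin d, |x i - y i| := by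
        have hsum : |x j - y j| + |x j₀ - y j₀| ≤ ∑ i : Fin d, |x i - y i| := by
          have h2 := Finset.sum_le_sum_of_subset_of_nonneg
            (s := ({j, j₀} : Finset (Fin d))) (f := fun z => |x z - y z|)
            (by intro z _; exact Finset.mem_univ z) (fun z _ _ => abs_nonneg _)
          rw [Finset.sum_pair hj] at h2
          simpa using h2
        omega
      omega
    refine ⟨(j₀, decide (y j₀ - x j₀ = 1)), ?_⟩
    funext j
    simp only [Pi.add_apply, vec]
    by_cases hj : j = j₀
    · subst hj
      simp only [if_pos rfl]
      have : x j - y j = 1 ∨ x j - y j = -1 := abs_eq (by norm_num) |>.mp heq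
      rcases this with h' | h'
      · have : ¬ (y j - x j = 1) := by omega
        simp [this]; omega
      · have : y j - x j = 1 := by omega
        simp [this]; omega
    · simp only [if_neg hj]
      rw [hrest j hj]; ring
  · rintro ⟨s, rfl⟩
    exact latAdj_add_vec x s

/-- Walking from `x` along a word, staying inside `A` (all visited points, including
endpoints, lie in `A`). -/
def WalkIn (A : Set (Fin d → ℤ)) : (Fin d → ℤ) → List (Stp d) → Prop
  | x, [] => x ∈ A
  | x, s :: w => x ∈ A ∧ WalkIn A (x + vec s) w

def follow : (Fin d → ℤ) → List (Stp d) → (Fin d → ℤ)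
  | x, [] => x
  | x, s :: w => follow (x + vec s) w

lemma follow_append (x : Fin d → ℤ) (w₁ w₂ : List (Stp d)) :
    follow x (w₁ ++ w₂) = follow (follow x w₁) w₂ := by
  induction w₁ generalizing x with
  | nil => rfl
  | cons s t ih => simp only [List.cons_append, follow]; exact ih _

lemma walkIn_head {A : Set (Fin d → ℤ)} {x : Fin d → ℤ} {w : List (Stp d)}
    (h : WalkIn A x w) : x ∈ A := by
  cases w with
  | nil => exact h
  | cons s t => exact h.1

lemma connIn_to_word {A : Set (Fin d → ℤ)} {x y : Fin d → ℤ} (h : ConnIn A x y) :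
    ∃ w : List (Stp d), WalkIn A x w ∧ follow x w = y := by
  obtain ⟨γ, k, ⟨hmem, hadj⟩, h0, hk⟩ := h
  subst h0; subst hk
  induction k generalizing γ with
  | zero => exact ⟨[], hmem 0 le_rfl, rfl⟩
  | succ n ih =>
    have hadj0 : latAdj (γ 0) (γ 1) := hadj 0 (Nat.succ_pos n)
    obtain ⟨s, hs⟩ := latAdj_iff.mp hadj0
    obtain ⟨w, hw, hf⟩ := ih (fun i => γ (i + 1))
      (fun i hi => hmem (i+1) (by omega)) (fun i hi => hadj (i+1) (by omega))
    refine ⟨s :: w, ⟨hmem 0 (by omega), ?_⟩, ?_⟩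
    · rw [← hs]; exact hw
    · simp only [follow, ← hs]
      exact hf

lemma word_to_connIn {A : Set (Fin d → ℤ)} {x : Fin d → ℤ} {w : List (Stp d)}
    (h : WalkIn A x w) : ConnIn A x (follow x w) := by
  induction w generalizing x with
  | nil => exact connIn_refl h
  | cons s t ih =>
    obtain ⟨hx, hw⟩ := h
    exact connIn_trans
      (connIn_single hx (walkIn_head hw) (latAdj_add_vec x s)) (ih hw)

end

end AnnularProof
namespace AnnularProof

variable {d : ℕ}

noncomputable section

/-! ### Elementary moves on words and reachability of a canonical form -/

/-- Elementary homotopy moves on words: swapping two consecutive non-inverse steps,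
and cancelling a backtrack. -/
inductive Mv : List (Stp d) → List (Stp d) → Prop
  | swap (pre post : List (Stp d)) (s t : Stp d) (h : t ≠ sinv s) :
      Mv (pre ++ s :: t :: post) (pre ++ t :: s :: post)
  | cancel (pre post : List (Stp d)) (s : Stp d) :
      Mv (pre ++ s :: sinv s :: post) (pre ++ post)

def Rel : List (Stp d) → List (Stp d) → Prop :=
  Relation.ReflTransGen (fun u v => Mv u v ∨ Mv v u)

lemma rel_refl (w : List (Stp d)) : Rel w w := Relation.ReflTransGen.refl

lemma rel_of_eq {w w' : List (Stp d)} (h : w = w') : Rel w w' := h ▸ rel_refl w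

lemma rel_trans {a b c : List (Stp d)} (h1 : Rel a b) (h2 : Rel b c) : Rel a c :=
  Relation.ReflTransGen.trans h1 h2

lemma rel_symm {a b : List (Stp d)} (h : Rel a b) : Rel b a := by
  induction h with
  | refl => exact rel_refl a
  | tail _ h2 ih =>
    exact rel_trans (Relation.ReflTransGen.single (Or.symm h2)) ih

lemma rel_single {a b : List (Stp d)} (h : Mv a b) : Rel a b :=
  Relation.ReflTransGen.single (Or.inl h)

lemma mv_context {u v : List (Stp d)} (pre post : List (Stp d)) (h : Mv u v) :
    Mv (pre ++ u ++ post) (pre ++ v ++ post) := by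
  cases h with
  | swap pre' post' s t hst =>
    have e1 : pre ++ (pre' ++ s :: t :: post') ++ post
        = (pre ++ pre') ++ s :: t :: (post' ++ post) := by simp
    have e2 : pre ++ (pre' ++ t :: s :: post') ++ post
        = (pre ++ pre') ++ t :: s :: (post' ++ post) := by simp
    rw [e1, e2]
    exact Mv.swap _ _ s t hst
  | cancel pre' post' s =>
    have e1 : pre ++ (pre' ++ s :: sinv s :: post') ++ post
        = (pre ++ pre') ++ s :: sinv s :: (post' ++ post) := by simp
    have e2 : pre ++ (pre' ++ post') ++ post = (pre ++ pre') ++ (post' ++ post) := by simp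
    rw [e1, e2]
    exact Mv.cancel _ _ s

lemma rel_context {u v : List (Stp d)} (pre post : List (Stp d)) (h : Rel u v) :
    Rel (pre ++ u ++ post) (pre ++ v ++ post) := by
  induction h with
  | refl => exact rel_refl _
  | tail _ h2 ih =>
    refine rel_trans ih (Relation.ReflTransGen.single ?_)
    rcases h2 with h2 | h2
    · exact Or.inl (mv_context pre post h2)
    · exact Or.inr (mv_context pre post h2)

lemma rel_cons {u v : List (Stp d)} (s : Stp d) (h : Rel u v) : Rel (s :: u) (s :: v) := by
  have := rel_context [s] [] h
  simpa using this

/-- Bubbling a step left past letters of other axes. -/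
lemma rel_bubble (s : Stp d) (l r : List (Stp d)) (h : ∀ t ∈ l, t.1 ≠ s.1) :
    Rel (s :: (l ++ r)) (l ++ (s :: r)) := by
  induction l generalizing r with
  | nil => exact rel_refl _
  | cons t l' ih =>
    have hts : t ≠ sinv s := by
      intro he
      exact (h t List.mem_cons_self) (by rw [he]; rfl)
    have h1 : Mv (s :: t :: (l' ++ r)) (t :: s :: (l' ++ r)) := by
      have := Mv.swap [] (l' ++ r) s t hts
      simpa using this
    have h2 : Rel (t :: (s :: (l' ++ r))) (t :: (l' ++ (s :: r))) :=
      rel_cons t (ih r (fun u hu => h u (List.mem_cons_of_mem t hu)))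
    have h3 : Rel (s :: t :: (l' ++ r)) (t :: (l' ++ (s :: r))) :=
      rel_trans (rel_single h1) h2
    simpa using h3

/-- The block of a canonical word in a given axis. -/
def block (i : Fin d) (n : ℤ) : List (Stp d) :=
  List.replicate n.natAbs (i, decide (0 < n))

lemma mem_block_axis {i : Fin d} {n : ℤ} {t : Stp d} (h : t ∈ block i n) : t.1 = i := by
  unfold block at h
  rw [List.eq_of_mem_replicate h]

def gcanon (L : List (Fin d)) (δ : Fin d → ℤ) : List (Stp d) :=
  L.flatMap (fun i => block i (δ i))

lemma mem_gcanon_axis {L : List (Fin d)} {δ : Fin d → ℤ} {t : Stp d}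
    (h : t ∈ gcanon L δ) : t.1 ∈ L := by
  unfold gcanon at h
  obtain ⟨i, hi, ht⟩ := List.mem_flatMap.mp h
  rw [mem_block_axis ht]; exact hi

/-- Inserting a step into a block of the same axis. -/
lemma rel_block_ins_t (i : Fin d) (n : ℤ) :
    Rel ((i, true) :: block i n) (block i (n + 1)) := by
  rcases lt_trichotomy n 0 with hn | hn | hn
  · have hdec : decide (0 < n) = false := by simp; omega
    have hrep : block i n = (i, false) :: List.replicate (n.natAbs - 1) (i, false) := by
      unfold block
      rw [hdec]
      have h2 : n.natAbs = (n.natAbs - 1) + 1 := by omega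
      conv_lhs => rw [h2]
      rw [List.replicate_succ]
    rw [hrep]
    have hc := Mv.cancel ([] : List (Stp d)) (List.replicate (n.natAbs - 1) (i, false)) (i, true)
    have he : sinv (i, true) = (i, false) := by simp [sinv]
    rw [he] at hc
    simp only [List.nil_append] at hc
    refine rel_trans (rel_single hc) (rel_of_eq ?_)
    unfold block
    have h3 : (n + 1).natAbs = n.natAbs - 1 := by omega
    have h4 : decide (0 < n + 1) = false := by simp; omega
    rw [h3, h4]
  · subst hn
    refine rel_of_eq ?_
    unfold block
    norm_num
  · refine rel_of_eq ?_
    unfold block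
    have h3 : (n + 1).natAbs = n.natAbs + 1 := by omega
    have h4 : decide (0 < n + 1) = true := by simp; omega
    have hdec : decide (0 < n) = true := by simp; omega
    rw [h3, h4, hdec, List.replicate_succ]

lemma rel_block_ins_f (i : Fin d) (n : ℤ) :
    Rel ((i, false) :: block i n) (block i (n - 1)) := by
  rcases lt_trichotomy n 0 with hn | hn | hn
  · refine rel_of_eq ?_
    unfold block
    have h3 : (n - 1).natAbs = n.natAbs + 1 := by omega
    have h4 : decide (0 < n - 1) = false := by simp; omega
    have hdec : decide (0 < n) = false := by simp; omega
    rw [h3, h4, hdec, List.replicate_succ]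
  · subst hn
    refine rel_of_eq ?_
    unfold block
    norm_num
  · have hdec : decide (0 < n) = true := by simp; omega
    have hrep : block i n = (i, true) :: List.replicate (n.natAbs - 1) (i, true) := by
      unfold block
      rw [hdec]
      have h2 : n.natAbs = (n.natAbs - 1) + 1 := by omega
      conv_lhs => rw [h2]
      rw [List.replicate_succ]
    rw [hrep]
    have hc := Mv.cancel ([] : List (Stp d)) (List.replicate (n.natAbs - 1) (i, true)) (i, false)
    have he : sinv (i, false) = (i, true) := by simp [sinv]
    rw [he] at hc
    simp only [List.nil_append] at hc
    refine rel_trans (rel_single hc) (rel_of_eq ?_)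
    unfold block
    have h3 : (n - 1).natAbs = n.natAbs - 1 := by omega
    rcases eq_or_lt_of_le (show 0 ≤ n - 1 by omega) with h5 | h5
    · have h6 : n - 1 = 0 := by omega
      rw [h6]
      have h7 : n.natAbs - 1 = 0 := by omega
      rw [h7]
      simp
    · have h4 : decide (0 < n - 1) = true := by simp; omega
      rw [h3, h4]

def canon (δ : Fin d → ℤ) : List (Stp d) := gcanon (List.finRange d) δ

def wsum : List (Stp d) → (Fin d → ℤ)
  | [] => 0
  | s :: w => vec s + wsum w

lemma follow_eq_wsum (x : Fin d → ℤ) (w : List (Stp d)) : follow x w = x + wsum w := by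
  induction w generalizing x with
  | nil => simp [follow, wsum]
  | cons s t ih =>
    show follow (x + vec s) t = x + (vec s + wsum t)
    rw [ih, add_assoc]

lemma gcanon_append (L₁ L₂ : List (Fin d)) (δ : Fin d → ℤ) :
    gcanon (L₁ ++ L₂) δ = gcanon L₁ δ ++ gcanon L₂ δ := by
  unfold gcanon
  exact List.flatMap_append

lemma gcanon_cons (i : Fin d) (L : List (Fin d)) (δ : Fin d → ℤ) :
    gcanon (i :: L) δ = block i (δ i) ++ gcanon L δ := by
  unfold gcanon
  simp [List.flatMap_cons]

lemma gcanon_congr {L : List (Fin d)} {δ₁ δ₂ : Fin d → ℤ}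
    (h : ∀ j ∈ L, δ₁ j = δ₂ j) : gcanon L δ₁ = gcanon L δ₂ := by
  unfold gcanon
  induction L with
  | nil => rfl
  | cons i L ih =>
    simp only [List.flatMap_cons]
    rw [h i List.mem_cons_self, ih (fun j hj => h j (List.mem_cons_of_mem i hj))]

lemma canon_zero : canon (0 : Fin d → ℤ) = [] := by
  unfold canon gcanon
  induction (List.finRange d) with
  | nil => rfl
  | cons i L ih =>
    simp only [List.flatMap_cons, ih, List.append_nil]
    simp [block]

lemma rel_canon_ins (s : Stp d) (δ : Fin d → ℤ) :
    Rel (s :: canon δ) (canon (vec s + δ)) := by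
  obtain ⟨i, b⟩ := s
  have hmem : i ∈ List.finRange d := List.mem_finRange i
  obtain ⟨P, Q, hPQ⟩ := List.append_of_mem hmem
  have hnodup : (List.finRange d).Nodup := List.nodup_finRange d
  rw [hPQ] at hnodup
  have hiP : i ∉ P := by
    intro hiP
    exact (List.disjoint_of_nodup_append hnodup) hiP List.mem_cons_self
  have hiQ : i ∉ Q := by
    have h1 := (List.nodup_append'.mp hnodup).2.1
    exact (List.nodup_cons.mp h1).1
  have hδ : ∀ j, j ≠ i → (vec (i, b) + δ) j = δ j := by
    intro j hj
    simp [vec, hj]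
  have hδi : (vec (i, b) + δ) i = δ i + (if b then 1 else -1) := by
    simp [vec, add_comm]
  have hdecomp : ∀ δ' : Fin d → ℤ,
      canon δ' = gcanon P δ' ++ (block i (δ' i) ++ gcanon Q δ') := by
    intro δ'
    unfold canon
    rw [hPQ, gcanon_append, gcanon_cons]
  have hax : ∀ t ∈ gcanon P δ, t.1 ≠ (i, b).1 := by
    intro t ht he
    have := mem_gcanon_axis ht
    rw [he] at this
    exact hiP this
  -- bubble the step to its block
  have h1 : Rel ((i, b) :: canon δ)
      (gcanon P δ ++ ((i, b) :: (block i (δ i) ++ gcanon Q δ))) := by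
    rw [hdecomp δ]
    exact rel_bubble (i, b) (gcanon P δ) _ hax
  -- insert into the block
  have h2 : Rel ((i, b) :: block i (δ i)) (block i (δ i + (if b then 1 else -1))) := by
    cases b with
    | true => simpa using rel_block_ins_t i (δ i)
    | false =>
      have := rel_block_ins_f i (δ i)
      simpa [sub_eq_add_neg] using this
  have h3 : Rel (gcanon P δ ++ ((i, b) :: (block i (δ i) ++ gcanon Q δ)))
      (gcanon P δ ++ (block i (δ i + (if b then 1 else -1)) ++ gcanon Q δ)) := by
    have := rel_context (gcanon P δ) (gcanon Q δ) h2
    simpa using this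
  refine rel_trans (rel_trans h1 h3) (rel_of_eq ?_)
  rw [hdecomp (vec (i, b) + δ)]
  rw [gcanon_congr (fun j hj => (hδ j (fun he => hiP (he ▸ hj))).symm),
      gcanon_congr (fun j hj => (hδ j (fun he => hiQ (he ▸ hj))).symm), hδi]

lemma rel_canon (w : List (Stp d)) : Rel w (canon (wsum w)) := by
  induction w with
  | nil => exact rel_of_eq (by rw [show wsum ([] : List (Stp d)) = 0 from rfl, canon_zero])
  | cons s t ih =>
    exact rel_trans (rel_cons s ih) (rel_canon_ins s (wsum t))

lemma rel_of_follow_eq {p : Fin d → ℤ} {w w' : List (Stp d)}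
    (h : follow p w = follow p w') : Rel w w' := by
  have hs : wsum w = wsum w' := by
    have h1 := follow_eq_wsum p w
    have h2 := follow_eq_wsum p w'
    rw [h1, h2] at h
    exact add_left_cancel h
  exact rel_trans (rel_canon w) (rel_symm (hs ▸ rel_canon w'))

end

end AnnularProof
namespace AnnularProof

variable {d : ℕ}

noncomputable section
open Classical

/-! ### The mod-2 crossing invariant -/

def ind (S : Set (Fin d → ℤ)) (c : Fin d → ℤ) : ZMod 2 := if c ∈ S then 1 else 0

/-- Crossing indicator of an edge relative to the component `F` and the obstacle `V`. -/
def crs (F V : Set (Fin d → ℤ)) (a b : Fin d → ℤ) : ZMod 2 :=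
  ind F a * ind V b + ind V a * ind F b

lemma crs_comm (F V : Set (Fin d → ℤ)) (a b : Fin d → ℤ) : crs F V a b = crs F V b a := by
  unfold crs; ring

def phi (F V : Set (Fin d → ℤ)) : (Fin d → ℤ) → List (Stp d) → ZMod 2
  | _, [] => 0
  | x, s :: w => crs F V x (x + vec s) + phi F V (x + vec s) w

lemma phi_append (F V : Set (Fin d → ℤ)) (x : Fin d → ℤ) (w₁ w₂ : List (Stp d)) :
    phi F V x (w₁ ++ w₂) = phi F V x w₁ + phi F V (follow x w₁) w₂ := by
  induction w₁ generalizing x with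
  | nil => simp [phi, follow]
  | cons s t ih =>
    show crs F V x (x + vec s) + phi F V (x + vec s) (t ++ w₂) = _
    rw [ih]
    show _ = crs F V x (x + vec s) + phi F V (x + vec s) t + phi F V (follow (x + vec s) t) w₂
    ring

section Geometric

variable {F U V : Set (Fin d → ℤ)}

lemma crs_edge (hFV : ∀ c ∈ F, c ∉ V)
    (hFmax : ∀ a b, a ∈ F → latAdj a b → b ∉ U → b ∉ V → b ∈ F)
    (a b : Fin d → ℤ) (hab : latAdj a b) (haU : a ∉ U) (hbU : b ∉ U) :
    crs F V a b = ind F a + ind F b := by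
  unfold crs ind
  by_cases ha : a ∈ F <;> by_cases hb : b ∈ F
  · have hva : a ∉ V := hFV a ha
    have hvb : b ∉ V := hFV b hb
    simp only [if_pos ha, if_pos hb, if_neg hva, if_neg hvb]
    decide
  · have hbV : b ∈ V := by
      by_contra hbV
      exact hb (hFmax a b ha hab hbU hbV)
    have hva : a ∉ V := hFV a ha
    simp only [if_pos ha, if_neg hb, if_pos hbV, if_neg hva]
    decide
  · have haV : a ∈ V := by
      by_contra haV
      exact ha (hFmax b a hb (latAdj_symm hab) haU haV)
    have hvb : b ∉ V := hFV b hb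
    simp only [if_neg ha, if_pos hb, if_pos haV, if_neg hvb]
    decide
  · simp only [if_neg ha, if_neg hb]
    ring

lemma crs_noV (a b : Fin d → ℤ) (haV : a ∉ V) (hbV : b ∉ V) : crs F V a b = 0 := by
  unfold crs ind
  simp only [if_neg haV, if_neg hbV]
  ring

/-- The square identity: the crossing count around a unit square vanishes. -/
lemma square_id (hFV : ∀ c ∈ F, c ∉ V)
    (hFmax : ∀ a b, a ∈ F → latAdj a b → b ∉ U → b ∉ V → b ∈ F)
    (hNoMix : ∀ z ∈ U, ∀ w ∈ V, ¬(∀ i, |z i - w i| ≤ 1))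
    (y : Fin d → ℤ) (s t : Stp d) (haxis : s.1 ≠ t.1) :
    crs F V y (y + vec s) + crs F V (y + vec s) (y + vec s + vec t)
      + (crs F V y (y + vec t) + crs F V (y + vec t) (y + vec t + vec s)) = 0 := by
  have hcomm : y + vec t + vec s = y + vec s + vec t := by ring
  rw [hcomm]
  set c0 := y
  set c1 := y + vec s
  set c2 := y + vec t
  set c3 := y + vec s + vec t
  have hbox : ∀ a b : Fin d → ℤ, (∃ e1 : ℤ, ∃ e2 : ℤ, |e1| ≤ 1 ∧ |e2| ≤ 1 ∧
      a - b = e1 • vec s + e2 • vec t) → ∀ i, |a i - b i| ≤ 1 := by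
    rintro a b ⟨e1, e2, he1, he2, hab⟩ i
    have : a i - b i = e1 * vec s i + e2 * vec t i := by
      have := congrFun hab i
      simpa using this
    rw [this]
    by_cases hi1 : i = s.1
    · have hne : i ≠ t.1 := fun h' => haxis (hi1.symm.trans h')
      have hv2 : vec t i = 0 := by simp [vec, hne]
      rw [hv2, mul_zero, add_zero, abs_mul]
      calc |e1| * |vec s i| ≤ 1 * 1 :=
            mul_le_mul he1 (vec_coord_le s i) (abs_nonneg _) (by norm_num)
        _ = 1 := by norm_num
    · have hv1 : vec s i = 0 := by simp [vec, hi1]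
      rw [hv1, mul_zero, zero_add, abs_mul]
      calc |e2| * |vec t i| ≤ 1 * 1 :=
            mul_le_mul he2 (vec_coord_le t i) (abs_nonneg _) (by norm_num)
        _ = 1 := by norm_num
  have hsq : ∀ a ∈ [c0, c1, c2, c3], ∀ b ∈ [c0, c1, c2, c3], ∀ i, |a i - b i| ≤ 1 := by
    intro a ha b hb
    apply hbox
    simp only [List.mem_cons, List.not_mem_nil, or_false] at ha hb
    have habs1 : |(1:ℤ)| ≤ 1 := by norm_num
    have habs0 : |(0:ℤ)| ≤ 1 := by norm_num
    have habsm : |(-1:ℤ)| ≤ 1 := by norm_num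
    rcases ha with rfl | rfl | rfl | rfl <;> rcases hb with rfl | rfl | rfl | rfl
    · exact ⟨0, 0, habs0, habs0, by simp [c0]⟩
    · exact ⟨-1, 0, habsm, habs0, by simp [c0, c1]; try ring⟩
    · exact ⟨0, -1, habs0, habsm, by simp [c0, c2]; try ring⟩
    · exact ⟨-1, -1, habsm, habsm, by simp [c0, c3]; try ring⟩
    · exact ⟨1, 0, habs1, habs0, by simp [c0, c1]; try ring⟩
    · exact ⟨0, 0, habs0, habs0, by simp⟩
    · exact ⟨1, -1, habs1, habsm, by simp [c1, c2]; try ring⟩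
    · exact ⟨0, -1, habs0, habsm, by simp [c1, c3]; try ring⟩
    · exact ⟨0, 1, habs0, habs1, by simp [c0, c2]; try ring⟩
    · exact ⟨-1, 1, habsm, habs1, by simp [c1, c2]; try ring⟩
    · exact ⟨0, 0, habs0, habs0, by simp⟩
    · exact ⟨-1, 0, habsm, habs0, by simp [c2, c3]; try ring⟩
    · exact ⟨1, 1, habs1, habs1, by simp [c0, c3]; try ring⟩
    · exact ⟨0, 1, habs0, habs1, by simp [c1, c3]; try ring⟩
    · exact ⟨1, 0, habs1, habs0, by simp [c2, c3]; try ring⟩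
    · exact ⟨0, 0, habs0, habs0, by simp⟩
  by_cases hV : c0 ∈ V ∨ c1 ∈ V ∨ c2 ∈ V ∨ c3 ∈ V
  · -- some cell is in V, hence no cell is in U
    have hnoU : ∀ a ∈ [c0, c1, c2, c3], a ∉ U := by
      intro a ha haU
      rcases hV with hv | hv | hv | hv
      · exact hNoMix a haU c0 hv (hsq a ha c0 (by simp))
      · exact hNoMix a haU c1 hv (hsq a ha c1 (by simp))
      · exact hNoMix a haU c2 hv (hsq a ha c2 (by simp))
      · exact hNoMix a haU c3 hv (hsq a ha c3 (by simp))
    have h01 : latAdj c0 c1 := latAdj_add_vec y s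
    have h13 : latAdj c1 c3 := latAdj_add_vec _ t
    have h02 : latAdj c0 c2 := latAdj_add_vec y t
    have h23 : latAdj c2 c3 := by
      have : c3 = c2 + vec s := by simp only [c2, c3]; ring
      rw [this]
      exact latAdj_add_vec _ s
    rw [crs_edge (U := U) hFV hFmax c0 c1 h01 (hnoU c0 (by simp)) (hnoU c1 (by simp)),
        crs_edge (U := U) hFV hFmax c1 c3 h13 (hnoU c1 (by simp)) (hnoU c3 (by simp)),
        crs_edge (U := U) hFV hFmax c0 c2 h02 (hnoU c0 (by simp)) (hnoU c2 (by simp)),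
        crs_edge (U := U) hFV hFmax c2 c3 h23 (hnoU c2 (by simp)) (hnoU c3 (by simp))]
    generalize ind F c0 = a0
    generalize ind F c1 = a1
    generalize ind F c2 = a2
    generalize ind F c3 = a3
    revert a0 a1 a2 a3
    decide
  · push_neg at hV
    obtain ⟨h0, h1, h2, h3⟩ := hV
    rw [crs_noV c0 c1 h0 h1, crs_noV c1 c3 h1 h3, crs_noV c0 c2 h0 h2, crs_noV c2 c3 h2 h3]
    simp

lemma phi_mv (hFV : ∀ c ∈ F, c ∉ V)
    (hFmax : ∀ a b, a ∈ F → latAdj a b → b ∉ U → b ∉ V → b ∈ F)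
    (hNoMix : ∀ z ∈ U, ∀ w ∈ V, ¬(∀ i, |z i - w i| ≤ 1))
    {w w' : List (Stp d)} (h : Mv w w') (x : Fin d → ℤ) :
    phi F V x w = phi F V x w' := by
  cases h with
  | swap pre post s t hst =>
    by_cases hts : t = s
    · subst hts; rfl
    · have haxis : s.1 ≠ t.1 := by
        intro he
        obtain ⟨i1, b1⟩ := s
        obtain ⟨i2, b2⟩ := t
        simp only at he
        subst he
        cases b1 <;> cases b2 <;> simp_all [sinv]
      rw [phi_append, phi_append]
      congr 1
      set y := follow x pre
      show phi F V y (s :: t :: post) = phi F V y (t :: s :: post)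
      show crs F V y (y + vec s) + (crs F V (y + vec s) (y + vec s + vec t)
          + phi F V (y + vec s + vec t) post) = crs F V y (y + vec t)
          + (crs F V (y + vec t) (y + vec t + vec s) + phi F V (y + vec t + vec s) post)
      have hcomm : y + vec t + vec s = y + vec s + vec t := by ring
      rw [hcomm]
      have hid := square_id (U := U) hFV hFmax hNoMix (F := F) y s t haxis
      rw [hcomm] at hid
      have key : ∀ A B C D P : ZMod 2, A + B + (C + D) = 0 → A + (B + P) = C + (D + P) := by
        decide
      exact key _ _ _ _ _ hid
  | cancel pre post s =>
    rw [phi_append, phi_append]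
    congr 1
    set y := follow x pre
    show phi F V y (s :: sinv s :: post) = phi F V y post
    have he : y + vec s + vec (sinv s) = y := by rw [vec_sinv]; ring
    show crs F V y (y + vec s) + (crs F V (y + vec s) (y + vec s + vec (sinv s))
        + phi F V (y + vec s + vec (sinv s)) post) = phi F V y post
    rw [he, crs_comm F V (y + vec s) y]
    generalize crs F V y (y + vec s) = a
    generalize phi F V y post = b
    have key : ∀ a b : ZMod 2, a + (a + b) = b := by decide
    exact key a b

lemma phi_rel (hFV : ∀ c ∈ F, c ∉ V)
    (hFmax : ∀ a b, a ∈ F → latAdj a b → b ∉ U → b ∉ V → b ∈ F)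
    (hNoMix : ∀ z ∈ U, ∀ w ∈ V, ¬(∀ i, |z i - w i| ≤ 1))
    {w w' : List (Stp d)} (h : Rel w w') (x : Fin d → ℤ) :
    phi F V x w = phi F V x w' := by
  induction h with
  | refl => rfl
  | tail _ h2 ih =>
    rcases h2 with h2 | h2
    · exact ih.trans (phi_mv (U := U) hFV hFmax hNoMix h2 x)
    · exact ih.trans (phi_mv (U := U) hFV hFmax hNoMix h2 x).symm

lemma phi_walk_avoid_U (hFV : ∀ c ∈ F, c ∉ V)
    (hFmax : ∀ a b, a ∈ F → latAdj a b → b ∉ U → b ∉ V → b ∈ F)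
    {x : Fin d → ℤ} {w : List (Stp d)} (h : WalkIn Uᶜ x w) :
    phi F V x w = ind F x + ind F (follow x w) := by
  induction w generalizing x with
  | nil =>
    show (0 : ZMod 2) = ind F x + ind F x
    generalize ind F x = a
    revert a; decide
  | cons s t ih =>
    obtain ⟨hx, hw⟩ := h
    show crs F V x (x + vec s) + phi F V (x + vec s) t = _
    rw [ih hw,
      crs_edge (U := U) hFV hFmax x (x + vec s) (latAdj_add_vec x s) hx (walkIn_head hw)]
    show _ = ind F x + ind F (follow (x + vec s) t)
    generalize ind F x = a
    generalize ind F (x + vec s) = b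
    generalize ind F (follow (x + vec s) t) = c
    revert a b c; decide

lemma phi_walk_avoid_V {x : Fin d → ℤ} {w : List (Stp d)} (h : WalkIn Vᶜ x w) :
    phi F V x w = 0 := by
  induction w generalizing x with
  | nil => rfl
  | cons s t ih =>
    obtain ⟨hx, hw⟩ := h
    show crs F V x (x + vec s) + phi F V (x + vec s) t = 0
    rw [ih hw, crs_noV x (x + vec s) hx (walkIn_head hw)]
    decide

end Geometric

/-- Key separation lemma: if `p` and `q` are joined both by a path avoiding `U` and by a
path avoiding `V`, and no unit box meets both `U` and `V`, then they are joined by a path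
avoiding `U ∪ V`. -/
theorem separation {U V : Set (Fin d → ℤ)}
    (hNoMix : ∀ z ∈ U, ∀ w ∈ V, ¬(∀ i, |z i - w i| ≤ 1))
    {p q : Fin d → ℤ} (hU : ConnIn Uᶜ p q) (hV : ConnIn Vᶜ p q) :
    ConnIn (U ∪ V)ᶜ p q := by
  by_contra hq
  set F := connComp (U ∪ V)ᶜ p with hF
  have hp : p ∈ (U ∪ V)ᶜ := by
    intro hmem
    rcases hmem with hmem | hmem
    · exact (connIn_mem_left hU) hmem
    · exact (connIn_mem_left hV) hmem
  have hpF : p ∈ F := connIn_refl hp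
  have hqF : q ∉ F := hq
  have hFsub : ∀ c ∈ F, c ∈ (U ∪ V)ᶜ := fun c hc => connIn_mem_right hc
  have hFU : ∀ c ∈ F, c ∉ U := fun c hc hcU => (hFsub c hc) (Or.inl hcU)
  have hFV : ∀ c ∈ F, c ∉ V := fun c hc hcV => (hFsub c hc) (Or.inr hcV)
  have hFmax : ∀ a b, a ∈ F → latAdj a b → b ∉ U → b ∉ V → b ∈ F := by
    intro a b ha hab hbU hbV
    have hb : b ∈ (U ∪ V)ᶜ := by
      intro hmem
      rcases hmem with hmem | hmem
      · exact hbU hmem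
      · exact hbV hmem
    exact connIn_trans ha (connIn_single (hFsub a ha) hb hab)
  obtain ⟨w, hwalk, hfw⟩ := connIn_to_word hU
  obtain ⟨w', hwalk', hfw'⟩ := connIn_to_word hV
  have hrel : Rel w w' := rel_of_follow_eq (hfw.trans hfw'.symm)
  have h1 : phi F V p w = 1 := by
    rw [phi_walk_avoid_U (U := U) hFV hFmax hwalk, hfw]
    have hip : ind F p = 1 := by unfold ind; simp [hpF]
    have hiq : ind F q = 0 := by unfold ind; simp [hqF]
    rw [hip, hiq]
    decide
  have h2 : phi F V p w' = 0 := phi_walk_avoid_V hwalk'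
  have := phi_rel (U := U) hFV hFmax hNoMix hrel p
  rw [h1, h2] at this
  exact absurd this (by decide)


end

end AnnularProof
namespace AnnularProof

variable {d : ℕ}

/-! ### Star components -/

lemma starConnComp_sub {Sg : Set (Fin d → ℤ)} {x₀ : Fin d → ℤ} :
    starConnComp Sg x₀ ⊆ Sg := fun _ hz => starConnIn_mem_right hz

lemma starConnComp_closed {Sg : Set (Fin d → ℤ)} {x₀ z t : Fin d → ℤ}
    (hz : z ∈ starConnComp Sg x₀) (ht : t ∈ Sg) (hadj : latAdjStar z t) :
    t ∈ starConnComp Sg x₀ :=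
  starConnIn_trans hz (starConnIn_single (starConnIn_mem_right hz) ht hadj)

lemma starConnComp_path_mem {Sg : Set (Fin d → ℤ)} {x₀ : Fin d → ℤ}
    {γ : ℕ → Fin d → ℤ} {k : ℕ} (hpath : IsStarPathIn Sg γ k) (h0 : γ 0 = x₀) :
    ∀ i ≤ k, γ i ∈ starConnComp Sg x₀ := by
  intro i hi
  exact ⟨γ, i, ⟨fun j hj => hpath.1 j (le_trans hj hi), fun j hj => hpath.2 j (by omega)⟩,
    h0, rfl⟩

lemma starConnComp_internal {Sg : Set (Fin d → ℤ)} {x₀ z z' : Fin d → ℤ}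
    (hz : z ∈ starConnComp Sg x₀) (hz' : z' ∈ starConnComp Sg x₀) :
    StarConnIn (starConnComp Sg x₀) z z' := by
  obtain ⟨γ, k, hpath, h0, hk⟩ := hz
  obtain ⟨γ', k', hpath', h0', hk'⟩ := hz'
  have h1 : StarConnIn (starConnComp Sg x₀) x₀ z :=
    ⟨γ, k, ⟨fun i hi => starConnComp_path_mem hpath h0 i hi, hpath.2⟩, h0, hk⟩
  have h2 : StarConnIn (starConnComp Sg x₀) x₀ z' :=
    ⟨γ', k', ⟨fun i hi => starConnComp_path_mem hpath' h0' i hi, hpath'.2⟩, h0', hk'⟩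
  exact starConnIn_trans (starConnIn_symm h1) h2

/-! ### Interpolation of a star step by a nearest-neighbor path -/

lemma between_close {w₁ w₂ z : Fin d → ℤ} (hd : ∀ i, |w₁ i - w₂ i| ≤ 1)
    (hz : ∀ i, min (w₁ i) (w₂ i) ≤ z i ∧ z i ≤ max (w₁ i) (w₂ i)) :
    ∀ i, |z i - w₁ i| ≤ 1 := by
  intro i
  have h1 := hd i
  have h2 := (hz i).1
  have h3 := (hz i).2
  rcases le_total (w₁ i) (w₂ i) with h | h
  · rw [min_eq_left h] at h2
    rw [max_eq_right h] at h3
    rw [abs_sub_le_iff] at h1 ⊢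
    omega
  · rw [min_eq_right h] at h2
    rw [max_eq_left h] at h3
    rw [abs_sub_le_iff] at h1 ⊢
    omega

lemma star_step_conn {A : Set (Fin d → ℤ)} : ∀ (n : ℕ) (w₁ w₂ : Fin d → ℤ),
    (Finset.univ.filter (fun i => w₁ i ≠ w₂ i)).card ≤ n →
    (∀ i, |w₁ i - w₂ i| ≤ 1) →
    (∀ z : Fin d → ℤ, (∀ i, min (w₁ i) (w₂ i) ≤ z i ∧ z i ≤ max (w₁ i) (w₂ i)) → z ∈ A) →
    ConnIn A w₁ w₂ := by
  intro n
  induction n with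
  | zero =>
    intro w₁ w₂ hcard hd hav
    have : w₁ = w₂ := by
      funext i
      by_contra hne
      have : i ∈ Finset.univ.filter (fun i => w₁ i ≠ w₂ i) := by
        simp [hne]
      have := Finset.card_pos.mpr ⟨i, this⟩
      omega
    rw [this]
    refine connIn_refl (hav w₂ ?_)
    intro i
    exact ⟨min_le_right _ _, le_max_right _ _⟩
  | succ n ih =>
    intro w₁ w₂ hcard hd hav
    by_cases hempty : (Finset.univ.filter (fun i => w₁ i ≠ w₂ i)).card = 0
    · have : w₁ = w₂ := by
        funext i
        by_contra hne
        have hmem : i ∈ Finset.univ.filter (fun i => w₁ i ≠ w₂ i) := by simp [hne]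
        have := Finset.card_pos.mpr ⟨i, hmem⟩
        omega
      rw [this]
      refine connIn_refl (hav w₂ ?_)
      intro i
      exact ⟨min_le_right _ _, le_max_right _ _⟩
    · have hpos : 0 < (Finset.univ.filter (fun i => w₁ i ≠ w₂ i)).card :=
        Nat.pos_of_ne_zero hempty
      obtain ⟨i₀, hi₀⟩ := Finset.card_pos.mp hpos
      have hi₀ne : w₁ i₀ ≠ w₂ i₀ := by
        simpa using hi₀
      set w' := Function.update w₁ i₀ (w₂ i₀) with hw'
      have hw'eval : ∀ i, w' i = if i = i₀ then w₂ i₀ else w₁ i := by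
        intro i
        by_cases hi : i = i₀
        · subst hi; simp [hw']
        · simp [hw', hi]
      have hbetween : ∀ z : Fin d → ℤ,
          (∀ i, min (w' i) (w₂ i) ≤ z i ∧ z i ≤ max (w' i) (w₂ i)) →
          (∀ i, min (w₁ i) (w₂ i) ≤ z i ∧ z i ≤ max (w₁ i) (w₂ i)) := by
        intro z hz i
        have := hz i
        rw [hw'eval i] at this
        by_cases hi : i = i₀
        · rw [if_pos hi] at this
          subst hi
          simp only [min_self, max_self] at this
          constructor
          · exact le_trans (min_le_right _ _) this.1
          · exact le_trans this.2 (le_max_right _ _)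
        · rw [if_neg hi] at this
          exact this
      have hw'A : w' ∈ A := by
        apply hav
        intro i
        rw [hw'eval i]
        by_cases hi : i = i₀
        · rw [if_pos hi]; subst hi
          exact ⟨min_le_right _ _, le_max_right _ _⟩
        · rw [if_neg hi]
          exact ⟨min_le_left _ _, le_max_left _ _⟩
      have hw₁A : w₁ ∈ A := by
        apply hav
        intro i
        exact ⟨min_le_left _ _, le_max_left _ _⟩
      have hadj : latAdj w₁ w' := by
        unfold latAdj
        have : ∀ i, |w₁ i - w' i| = if i = i₀ then 1 else 0 := by
          intro i
          rw [hw'eval i]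
          by_cases hi : i = i₀
          · rw [if_pos hi, if_pos hi]
            subst hi
            have h1 := hd i
            have h2 : w₁ i ≠ w₂ i := hi₀ne
            rcases abs_cases (w₁ i - w₂ i) with ⟨he, _⟩ | ⟨he, _⟩ <;>
              rw [abs_sub_le_iff] at h1 <;> rw [he] <;> omega
          · rw [if_neg hi, if_neg hi]
            simp
        rw [Finset.sum_congr rfl (fun i _ => this i)]
        simp
      refine connIn_trans (connIn_single hw₁A hw'A hadj) (ih w' w₂ ?_ ?_ ?_)
      · have hsub : (Finset.univ.filter (fun i => w' i ≠ w₂ i)) ⊆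
            (Finset.univ.filter (fun i => w₁ i ≠ w₂ i)).erase i₀ := by
          intro j hj
          simp only [Finset.mem_filter, Finset.mem_univ, true_and] at hj
          rw [hw'eval j] at hj
          by_cases hji : j = i₀
          · rw [if_pos hji] at hj; exact absurd (by rw [hji]) hj
          · rw [if_neg hji] at hj
            exact Finset.mem_erase.mpr ⟨hji, by simp [hj]⟩
        have := Finset.card_le_card hsub
        have := Finset.card_erase_of_mem hi₀
        omega
      · intro i
        rw [hw'eval i]
        by_cases hi : i = i₀
        · rw [if_pos hi]; subst hi; simp
        · rw [if_neg hi]; exact hd i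
      · intro z hz
        exact hav z (hbetween z hz)

/-- Convert a star path, all of whose steps can be interpolated, into a nearest-neighbor
connection. -/
lemma star_path_to_conn {A T : Set (Fin d → ℤ)}
    (hmem : ∀ w ∈ A, w ∈ T)
    (hstep : ∀ w₁ w₂, w₁ ∈ A → w₂ ∈ A → latAdjStar w₁ w₂ → ConnIn T w₁ w₂)
    {z z' : Fin d → ℤ} (h : StarConnIn A z z') : ConnIn T z z' := by
  obtain ⟨γ, k, ⟨hmemp, hadj⟩, h0, hk⟩ := h
  subst h0; subst hk
  induction k generalizing γ with
  | zero => exact connIn_refl (hmem _ (hmemp 0 le_rfl))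
  | succ n ih =>
    have h1 : ConnIn T (γ 0) (γ 1) :=
      hstep _ _ (hmemp 0 (by omega)) (hmemp 1 (by omega)) (hadj 0 (by omega))
    exact connIn_trans h1 (ih (fun i => γ (i + 1))
      (fun i hi => hmemp (i + 1) (by omega)) (fun i hi => hadj (i + 1) (by omega)))

/-! ### The escape lemma (boundary points of a star component of `Sg` in the same
component of `Uᶜ` lie in the same component of `Sgᶜ`) -/

lemma star_comp_escape {Sg U : Set (Fin d → ℤ)} {x₀ : Fin d → ℤ}
    (hx₀ : x₀ ∈ Sg) (hUdef : U = starConnComp Sg x₀)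
    {p q : Fin d → ℤ} (hp : p ∈ outerBd U) (hq : q ∈ outerBd U)
    (hpq : ConnIn Uᶜ p q) : ConnIn Sgᶜ p q := by
  have hUsub : U ⊆ Sg := by rw [hUdef]; exact starConnComp_sub
  have hUclosed : ∀ z t, z ∈ U → t ∈ Sg → latAdjStar z t → t ∈ U := by
    intro z t hz ht hadj
    rw [hUdef] at hz ⊢
    exact starConnComp_closed hz ht hadj
  set V := Sg \ U with hV
  have hNoMix : ∀ z ∈ U, ∀ v ∈ V, ¬(∀ i, |z i - v i| ≤ 1) := by
    intro z hz v hv hclose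
    have hne : z ≠ v := fun he => hv.2 (he ▸ hz)
    have : v ∈ U := hUclosed z v hz hv.1 ⟨hne, hclose⟩
    exact hv.2 this
  obtain ⟨hpU, up, hupU, hpadj⟩ := hp
  obtain ⟨hqU, uq, huqU, hqadj⟩ := hq
  have houter_not_Sg : ∀ r u, r ∉ U → u ∈ U → latAdj r u → r ∉ Sg := by
    intro r u hrU hu hadj hrSg
    exact hrU (hUclosed u r hu hrSg (latAdjStar_symm (latAdj_star hadj)))
  have hpSg : p ∉ Sg := houter_not_Sg p up hpU hupU hpadj
  have hqSg : q ∉ Sg := houter_not_Sg q uq hqU huqU hqadj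
  -- the path through `U` avoiding `V`
  have hUV : ∀ w ∈ U, w ∈ Vᶜ := fun w hw hv => hv.2 hw
  have hstep : ∀ w₁ w₂, w₁ ∈ U → w₂ ∈ U → latAdjStar w₁ w₂ → ConnIn Vᶜ w₁ w₂ := by
    intro w₁ w₂ h1 h2 hadj
    apply star_step_conn (Finset.univ.filter (fun i => w₁ i ≠ w₂ i)).card w₁ w₂ le_rfl hadj.2
    intro z hz
    intro hzV
    have hclose := between_close hadj.2 hz
    have hzne : w₁ ≠ z := fun he => hzV.2 (he ▸ h1)
    have : z ∈ U := hUclosed w₁ z h1 hzV.1 ⟨hzne, fun i => by rw [abs_sub_comm]; exact hclose i⟩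
    exact hzV.2 this
  have hUconn : StarConnIn U up uq := by
    rw [hUdef]
    exact starConnComp_internal (hUdef ▸ hupU) (hUdef ▸ huqU)
  have hmid : ConnIn Vᶜ up uq := star_path_to_conn hUV hstep hUconn
  have hpV : p ∈ Vᶜ := fun hv => hpSg hv.1
  have hqV : q ∈ Vᶜ := fun hv => hqSg hv.1
  have hρ' : ConnIn Vᶜ p q := by
    refine connIn_trans (connIn_single hpV (hUV up hupU) hpadj) ?_
    refine connIn_trans hmid ?_
    exact connIn_symm (connIn_single hqV (hUV uq huqU) hqadj)
  have hsep := separation hNoMix hpq hρ'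
  have hUnion : U ∪ V = Sg := Set.union_diff_cancel hUsub
  rw [hUnion] at hsep
  exact hsep

end AnnularProof

namespace AnnularProof

variable {d : ℕ}

/-- A segment of a nearest-neighbor path gives a connection. -/
lemma path_segment {T : Set (Fin d → ℤ)} {τ : ℕ → Fin d → ℤ} {L : ℕ}
    (hadj : ∀ i < L, latAdj (τ i) (τ (i + 1))) {a b : ℕ} (hab : a ≤ b) (hbL : b ≤ L)
    (hmem : ∀ t, a ≤ t → t ≤ b → τ t ∈ T) : ConnIn T (τ a) (τ b) := by
  refine ⟨fun t => τ (a + t), b - a, ⟨?_, ?_⟩, by simp, ?_⟩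
  · intro i hi
    exact hmem (a + i) (by omega) (by omega)
  · intro i hi
    show latAdj (τ (a + i)) (τ (a + (i + 1)))
    have he : a + (i + 1) = (a + i) + 1 := by omega
    rw [he]
    exact hadj (a + i) (by omega)
  · show τ (a + (b - a)) = τ b
    rw [Nat.add_sub_cancel' hab]

end AnnularProof


open AnnularProof in
/-- Lemma on annular connections: let `Sg` be finite, `U` a `*`-component of `Sg`, and `W`
finite and either connected or a `*`-component of `Sg`, with `U ⪯ W` and the closure of
`U` connected to the closure of `W` within `Sgᶜ`. Then any point of `U` connected to `W`
by a path whose interior avoids `U` is connected to `W` by a path whose interior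
avoids `Sg`. -/
theorem annular_connection {d : ℕ} (Sg U W : Set (Fin d → ℤ))
    (hSgfin : Sg.Finite) (hWfin : W.Finite)
    (hU : IsStarComponent U Sg)
    (hW : ConnectedSet W ∨ IsStarComponent W Sg)
    (hsurr : Surr U W)
    (hcl : ∃ a ∈ clo U, ∃ b ∈ clo W, ConnIn Sgᶜ a b)
    (x : Fin d → ℤ) (hx : x ∈ U) (hπ : ConnAvoiding U x W) :
    ConnAvoiding Sg x W := by
  classical
  obtain ⟨x₀, hx₀Sg, hUdef⟩ := hU
  have hUsub : U ⊆ Sg := by rw [hUdef]; exact starConnComp_sub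
  have hUclosed : ∀ z t, z ∈ U → t ∈ Sg → latAdjStar z t → t ∈ U := by
    intro z t hz ht hadj
    rw [hUdef] at hz ⊢
    exact starConnComp_closed hz ht hadj
  by_cases hxW : x ∈ W
  · exact ⟨fun _ => x, 0, rfl, hxW, fun i hi => absurd hi (Nat.not_lt_zero i),
      fun i h1 h2 => absurd (h1.trans h2) (lt_irrefl 0)⟩
  obtain ⟨γ, k, hγ0, hγkW, hadj, hint⟩ := hπ
  have hPex : ∃ i, γ i ∈ W := ⟨k, hγkW⟩
  set m := Nat.find hPex with hmdef
  have hmW : γ m ∈ W := Nat.find_spec hPex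
  have hmmin : ∀ i < m, γ i ∉ W := fun i hi => Nat.find_min hPex hi
  have hm0 : 0 < m := by
    rcases Nat.eq_zero_or_pos m with h | h
    · exfalso
      apply hxW
      rw [← hγ0]
      have := hmW
      rwa [h] at this
    · exact h
  have hmk : m ≤ k := by
    by_contra h
    push_neg at h
    exact (hmmin k h) hγkW
  by_cases hm1 : m = 1
  · refine ⟨γ, 1, hγ0, by rw [← hm1]; exact hmW, fun i hi => hadj i (by omega),
      fun i h1 h2 => by omega⟩
  have hm2 : 2 ≤ m := by omega
  have hγ1U : γ 1 ∉ U := hint 1 (by omega) (by omega)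
  have hadj01 : latAdj x (γ 1) := by
    rw [← hγ0]
    exact hadj 0 (by omega)
  have hγ1Sg : γ 1 ∉ Sg := by
    intro hSg
    exact hγ1U (hUclosed x (γ 1) hx hSg (latAdj_star hadj01))
  by_cases hEW : ∃ w ∈ W, ConnIn Sgᶜ (γ 1) w ∨ ∃ e, ConnIn Sgᶜ (γ 1) e ∧ latAdj e w
  · -- a good component is adjacent to x : build the conclusion path
    obtain ⟨w, hwW, hcase⟩ := hEW
    rcases hcase with hconn | ⟨e, hconn, headj⟩
    · obtain ⟨σ, l, ⟨hσmem, hσadj⟩, hσ0, hσl⟩ := hconn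
      refine ⟨fun i => if i = 0 then x else σ (i - 1), l + 1, by simp, ?_, ?_, ?_⟩
      · have : l + 1 ≠ 0 := by omega
        simp only [this, if_false]
        rw [Nat.add_sub_cancel, hσl]
        exact hwW
      · intro i hi
        by_cases h0 : i = 0
        · subst h0
          simp only [if_pos rfl, if_neg (by omega : (0:ℕ) + 1 ≠ 0), Nat.add_sub_cancel]
          rw [hσ0]
          exact hadj01
        · simp only [if_neg h0, if_neg (by omega : i + 1 ≠ 0), Nat.add_sub_cancel]
          have he : i = (i - 1) + 1 := by omega
          rw [he]
          have := hσadj (i - 1) (by omega)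
          simpa using this
      · intro i h1 h2
        simp only [if_neg (by omega : i ≠ 0)]
        exact hσmem (i - 1) (by omega)
    · obtain ⟨σ, l, ⟨hσmem, hσadj⟩, hσ0, hσl⟩ := hconn
      refine ⟨fun i => if i = 0 then x else if i ≤ l + 1 then σ (i - 1) else w, l + 2,
        by simp, ?_, ?_, ?_⟩
      · have h1 : l + 2 ≠ 0 := by omega
        have h2 : ¬ (l + 2 ≤ l + 1) := by omega
        simp only [if_neg h1, if_neg h2]
        exact hwW
      · intro i hi
        by_cases h0 : i = 0
        · subst h0
          simp only [if_pos rfl, if_neg (by omega : (0:ℕ) + 1 ≠ 0),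
            if_pos (by omega : (0:ℕ) + 1 ≤ l + 1), Nat.add_sub_cancel]
          rw [hσ0]
          exact hadj01
        · by_cases hl : i ≤ l
          · simp only [if_neg h0, if_neg (by omega : i + 1 ≠ 0),
              if_pos (by omega : i ≤ l + 1), if_pos (by omega : i + 1 ≤ l + 1),
              Nat.add_sub_cancel]
            have he : i = (i - 1) + 1 := by omega
            rw [he]
            have := hσadj (i - 1) (by omega)
            simpa using this
          · have hil : i = l + 1 := by omega
            subst hil
            simp only [if_neg h0, if_neg (by omega : l + 1 + 1 ≠ 0),
              if_pos (le_refl (l + 1)), if_neg (by omega : ¬ l + 1 + 1 ≤ l + 1),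
              Nat.add_sub_cancel]
            rw [hσl]
            exact headj
      · intro i h1 h2
        have h0 : i ≠ 0 := by omega
        have hl : i ≤ l + 1 := by omega
        simp only [if_neg h0, if_pos hl]
        exact hσmem (i - 1) (by omega)
  · -- no good component : derive a contradiction
    exfalso
    have hE1 : ∀ w ∈ W, ¬ ConnIn Sgᶜ (γ 1) w := fun w hw hc => hEW ⟨w, hw, Or.inl hc⟩
    have hE2 : ∀ w ∈ W, ∀ e, ConnIn Sgᶜ (γ 1) e → ¬ latAdj e w :=
      fun w hw e hc ha => hEW ⟨w, hw, Or.inr ⟨e, hc, ha⟩⟩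
    have hintU : ∀ t, 1 ≤ t → t ≤ m - 1 → γ t ∉ U :=
      fun t h1 h2 => hint t (by omega) (by omega)
    have hγ1bd : γ 1 ∈ outerBd U := ⟨hγ1U, x, hx, latAdj_symm hadj01⟩
    have hC2 : ∀ z, z ∈ outerBd U → ConnIn Uᶜ (γ 1) z → ConnIn Sgᶜ (γ 1) z :=
      fun z hz hconn => star_comp_escape hx₀Sg hUdef hγ1bd hz hconn
    have hγmU : γ m ∉ U := by
      intro hmem
      have hm1U : γ (m - 1) ∉ U := hintU (m - 1) (by omega) le_rfl
      have hadjm : latAdj (γ (m - 1)) (γ m) := by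
        have := hadj (m - 1) (by omega)
        have he : m - 1 + 1 = m := by omega
        rwa [he] at this
      have hbd : γ (m - 1) ∈ outerBd U := ⟨hm1U, γ m, hmem, hadjm⟩
      have hcm : ConnIn Uᶜ (γ 1) (γ (m - 1)) := by
        apply path_segment hadj (by omega) (by omega : m - 1 ≤ k)
        intro t ht1 ht2
        exact hintU t ht1 ht2
      exact hE2 (γ m) hmW (γ (m - 1)) (hC2 _ hbd hcm) hadjm
    have hconn1m : ConnIn Uᶜ (γ 1) (γ m) := by
      apply path_segment hadj (by omega) hmk
      intro t ht1 ht2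
      rcases Nat.lt_or_ge t m with h | h
      · exact hintU t ht1 (by omega)
      · have : t = m := by omega
        rw [this]
        exact hγmU
    have hWK : ∀ w ∈ W, ConnIn Uᶜ (γ 1) w := by
      intro w hw
      rcases hW with hWconn | hWstar
      · obtain ⟨τ, l, ⟨hτmem, hτadj⟩, hτ0, hτl⟩ := hWconn (γ m) hmW w hw
        by_cases hhit : ∃ j, j ≤ l ∧ τ j ∈ U
        · exfalso
          set j₂ := Nat.find hhit with hj₂def
          have hj₂spec : j₂ ≤ l ∧ τ j₂ ∈ U := Nat.find_spec hhit
          have hj₂min : ∀ i < j₂, ¬ (i ≤ l ∧ τ i ∈ U) := fun i hi => Nat.find_min hhit hi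
          have hj₂0 : 0 < j₂ := by
            rcases Nat.eq_zero_or_pos j₂ with h | h
            · exfalso
              apply hγmU
              rw [← hτ0]
              have := hj₂spec.2
              rwa [h] at this
            · exact h
          have hpre : ∀ i, i ≤ j₂ - 1 → τ i ∉ U := by
            intro i hi hiU
            exact hj₂min i (by omega) ⟨by omega, hiU⟩
          have hadjj : latAdj (τ (j₂ - 1)) (τ j₂) := by
            have := hτadj (j₂ - 1) (by omega)
            have he : j₂ - 1 + 1 = j₂ := by omega
            rwa [he] at this
          have hbd : τ (j₂ - 1) ∈ outerBd U :=
            ⟨hpre (j₂ - 1) le_rfl, τ j₂, hj₂spec.2, hadjj⟩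
          have hcm : ConnIn Uᶜ (γ 1) (τ (j₂ - 1)) := by
            refine connIn_trans hconn1m ?_
            have := path_segment hτadj (Nat.zero_le (j₂ - 1)) (by omega : j₂ - 1 ≤ l)
              (fun t _ ht2 => Set.mem_compl (hpre t ht2))
            rwa [hτ0] at this
          have hτW : τ (j₂ - 1) ∈ W := hτmem (j₂ - 1) (by omega)
          exact hE1 (τ (j₂ - 1)) hτW (hC2 _ hbd hcm)
        · push_neg at hhit
          refine connIn_trans hconn1m ?_
          have := path_segment hτadj (Nat.zero_le l) (le_refl l)
            (fun t _ ht2 => Set.mem_compl (hhit t ht2))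
          rwa [hτ0, hτl] at this
      · obtain ⟨y₀, hy₀Sg, hWdef⟩ := hWstar
        have hWU : ∀ z, z ∈ W → z ∉ U := by
          intro z hzW hzU
          apply hxW
          rw [hWdef]
          rw [hWdef] at hzW
          rw [hUdef] at hzU
          have h3 : StarConnIn Sg x₀ x := by rw [hUdef] at hx; exact hx
          exact starConnIn_trans hzW (starConnIn_trans (starConnIn_symm hzU) h3)
        have hWsubSg : W ⊆ Sg := by rw [hWdef]; exact starConnComp_sub
        have hstep : ∀ w₁ w₂, w₁ ∈ W → w₂ ∈ W → latAdjStar w₁ w₂ → ConnIn Uᶜ w₁ w₂ := by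
          intro w₁ w₂ h1 h2 hadj'
          apply star_step_conn (Finset.univ.filter (fun i => w₁ i ≠ w₂ i)).card w₁ w₂
            le_rfl hadj'.2
          intro z hz hzU
          have hclose := between_close hadj'.2 hz
          have hzne : z ≠ w₁ := fun he => hWU w₁ h1 (he ▸ hzU)
          exact hWU w₁ h1 (hUclosed z w₁ hzU (hWsubSg h1) ⟨hzne, hclose⟩)
        have hWconnIn : StarConnIn W (γ m) w := by
          rw [hWdef]
          exact starConnComp_internal (hWdef ▸ hmW) (hWdef ▸ hw)
        exact connIn_trans hconn1m
          (star_path_to_conn (fun z hz => hWU z hz) hstep hWconnIn)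
    -- use `hcl` to reach the final contradiction
    obtain ⟨a, haclo, b, hbclo, hab⟩ := hcl
    have haSg : a ∉ Sg := connIn_mem_left hab
    have hbSg : b ∉ Sg := connIn_mem_right hab
    have habd : a ∈ outerBd U := by
      rcases haclo with h | h
      · exact absurd (hUsub h) haSg
      · exact h
    have hSgU : (Sgᶜ : Set (Fin d → ℤ)) ⊆ Uᶜ := Set.compl_subset_compl.mpr hUsub
    have hbK : ConnIn Uᶜ (γ 1) b := by
      rcases hbclo with hbW | hbbd
      · exact hWK b hbW
      · obtain ⟨hbW, w, hwW, hbwadj⟩ := hbbd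
        refine connIn_trans (hWK w hwW) ?_
        exact connIn_single (connIn_mem_right (hWK w hwW)) (fun hbU => hbSg (hUsub hbU))
          (latAdj_symm hbwadj)
    have haK : ConnIn Uᶜ (γ 1) a :=
      connIn_trans hbK (connIn_symm (connIn_mono hSgU hab))
    have haE : ConnIn Sgᶜ (γ 1) a := hC2 a habd haK
    have hbE : ConnIn Sgᶜ (γ 1) b := connIn_trans haE hab
    rcases hbclo with hbW | hbbd
    · exact hE1 b hbW hbE
    · obtain ⟨hbW, w, hwW, hbwadj⟩ := hbbd
      exact hE2 w hwW b hbE hbwadj
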